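/- For every prime p > 5, ∑_{k=1}^{p-1} k⁵ H_k² ≡ −(77/1200) p − 1/30 (mod p²), as rationals with denominators coprime to p. -/

import Mathlib

open Finset Nat

/-- Harmonic number `H n = ∑_{j=1}^n 1/j`. -/
def H (n : ℕ) : ℚ := ∑ j ∈ Finset.Icc 1 n, (1 : ℚ) / j

/-- Generalized harmonic number `H_n^{(α)} = ∑_{i=1}^n 1/i^α`. -/
def Hgen (n α : ℕ) : ℚ := ∑ i ∈ Finset.Icc 1 n, (1 : ℚ) / (i : ℚ) ^ α

/-- `S m = ∑_{r=0}^m C(m+1,r) B_r B_{m-r}`. -/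
def S (m : ℕ) : ℚ := ∑ r ∈ Finset.range (m + 1),
  ((m + 1).choose r : ℚ) * bernoulli r * bernoulli (m - r)

lemma H_succ (n : ℕ) : H (n + 1) = H n + 1 / ((n : ℚ) + 1) := by
  unfold H
  rw [Finset.sum_Icc_succ_top (by omega : 1 ≤ n + 1)]
  push_cast
  ring

/-- Closed form for `∑_{k=1}^n k^5 H_k^2`. -/
lemma closed_form (n : ℕ) : ∑ k ∈ Icc 1 n, (k : ℚ) ^ 5 * H k ^ 2 =
    (n : ℚ) ^ 2 * ((n : ℚ) + 1) ^ 2 * (2 * (n : ℚ) ^ 2 + 2 * (n : ℚ) - 1) / 12 * H n ^ 2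
    + ((n : ℚ) / 20 - 7 * (n : ℚ) ^ 2 / 72 - (n : ℚ) ^ 3 / 12 + 11 * (n : ℚ) ^ 4 / 72
        + (n : ℚ) ^ 5 / 30 - (n : ℚ) ^ 6 / 18) * H n
    + (119 * (n : ℚ) / 3600 - 31 * (n : ℚ) ^ 2 / 864 - (n : ℚ) ^ 3 / 240
        + 43 * (n : ℚ) ^ 4 / 4320 - 11 * (n : ℚ) ^ 5 / 900 + (n : ℚ) ^ 6 / 108) := by
  induction n with
  | zero => simp [H]
  | succ n ih =>
    rw [Finset.sum_Icc_succ_top (by omega : 1 ≤ n + 1), ih, H_succ]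
    have h : ((n : ℚ) + 1) ≠ 0 := by positivity
    push_cast
    field_simp
    ring

lemma sum_inv_zmod (p : ℕ) (hp : p.Prime) (hp5 : 5 < p) :
    ∑ k ∈ Icc 1 (p - 1), ((k : ZMod p))⁻¹ = 0 := by
  haveI : Fact p.Prime := ⟨hp⟩
  have h1 : Icc 1 (p - 1) = Ico 1 p := by
    rw [← Finset.Ico_add_one_right_eq_Icc]
    congr 1
    omega
  rw [h1]
  have h2 : ∑ k ∈ range p, ((k : ZMod p))⁻¹
      = ((0 : ℕ) : ZMod p)⁻¹ + ∑ k ∈ Ico 1 p, ((k : ZMod p))⁻¹ := by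
    rw [Finset.range_eq_Ico, Finset.sum_eq_sum_Ico_succ_bot (by omega : 0 < p)]
  have h3 : ∑ k ∈ range p, ((k : ZMod p))⁻¹ = ∑ x : ZMod p, x⁻¹ := by
    refine Finset.sum_nbij' (fun k => (k : ZMod p)) (fun x => x.val) ?_ ?_ ?_ ?_ ?_
    · intro a _; exact Finset.mem_univ _
    · intro x _; simp [ZMod.val_lt]
    · intro a ha
      simp only [Finset.mem_range] at ha
      exact ZMod.val_natCast_of_lt ha
    · intro x _; simp [ZMod.natCast_val, ZMod.cast_id]
    · intro a _; rfl
  have h4 : ∑ x : ZMod p, x⁻¹ = ∑ x : ZMod p, x :=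
    Function.Bijective.sum_comp (inv_involutive.bijective) id
  have h5 : ∑ x : ZMod p, x = 0 := by
    have := FiniteField.sum_pow_lt_card_sub_one (K := ZMod p) 1 (by rw [ZMod.card]; omega)
    simpa using this
  have h6 := h2
  rw [h3, h4, h5] at h6
  simpa using h6.symm

lemma H_mul_factorial (n : ℕ) :
    H n * (n ! : ℚ) = ((∑ k ∈ Icc 1 n, n ! / k : ℕ) : ℚ) := by
  unfold H
  rw [Finset.sum_mul, Nat.cast_sum]
  apply Finset.sum_congr rfl
  intro k hk
  simp only [Finset.mem_Icc] at hk
  have hd : k ∣ n ! := Nat.dvd_factorial (by omega) hk.2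
  have hk0 : (k : ℚ) ≠ 0 := by exact_mod_cast (by omega : k ≠ 0)
  rw [Nat.cast_div hd hk0]
  field_simp

lemma p_dvd_J (p : ℕ) (hp : p.Prime) (hp5 : 5 < p) :
    p ∣ ∑ k ∈ Icc 1 (p - 1), (p - 1)! / k := by
  haveI : Fact p.Prime := ⟨hp⟩
  rw [← ZMod.natCast_eq_zero_iff, Nat.cast_sum]
  have hstep : ∀ k ∈ Icc 1 (p - 1),
      (((p - 1)! / k : ℕ) : ZMod p) = (((p - 1)! : ℕ) : ZMod p) * ((k : ZMod p))⁻¹ := by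
    intro k hk
    simp only [Finset.mem_Icc] at hk
    have hd : k ∣ (p - 1)! := Nat.dvd_factorial (by omega) hk.2
    have hmul : ((p - 1)! / k) * k = (p - 1)! := Nat.div_mul_cancel hd
    have hknz : (k : ZMod p) ≠ 0 := by
      rw [Ne, ZMod.natCast_eq_zero_iff]
      intro hpk
      have := Nat.le_of_dvd (by omega) hpk
      omega
    have hc : (((p - 1)! / k : ℕ) : ZMod p) * (k : ZMod p) = (((p - 1)! : ℕ) : ZMod p) := by
      rw [← Nat.cast_mul, hmul]
    exact (eq_mul_inv_iff_mul_eq₀ hknz).mpr hc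
  calc ∑ k ∈ Icc 1 (p - 1), (((p - 1)! / k : ℕ) : ZMod p)
      = ∑ k ∈ Icc 1 (p - 1), (((p - 1)! : ℕ) : ZMod p) * ((k : ZMod p))⁻¹ :=
        Finset.sum_congr rfl hstep
    _ = (((p - 1)! : ℕ) : ZMod p) * ∑ k ∈ Icc 1 (p - 1), ((k : ZMod p))⁻¹ := by
        rw [Finset.mul_sum]
    _ = 0 := by rw [sum_inv_zmod p hp hp5, mul_zero]

theorem stmt14 (p : ℕ) (hp : p.Prime) (hp5 : 5 < p) :
    (p : ℤ) ^ 2 ∣ ((∑ k ∈ Finset.Icc 1 (p - 1), (k : ℚ) ^ 5 * H k ^ 2)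
      - (-(77 / 1200) * (p : ℚ) - 1 / 30)).num := by
  haveI : Fact p.Prime := ⟨hp⟩
  obtain ⟨a, ha⟩ := p_dvd_J p hp hp5
  set n := p - 1 with hn
  have hpn : p = n + 1 := by omega
  have hp_cast : (p : ℚ) = (n : ℚ) + 1 := by rw [hpn]; push_cast; ring
  have hfacnz : (n ! : ℚ) ≠ 0 := by exact_mod_cast Nat.factorial_ne_zero n
  have hHa : H n * (n ! : ℚ) = ((n : ℚ) + 1) * (a : ℚ) := by
    rw [H_mul_factorial n, ha, ← hp_cast]
    push_cast
    ring
  have hH : H n = ((n : ℚ) + 1) * (a : ℚ) / (n ! : ℚ) := by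
    rw [eq_div_iff hfacnz]
    exact hHa
  set A : ℤ := ((n : ℤ) + 1) ^ 2 * (1800 * (n : ℤ) ^ 2 * (2 * (n : ℤ) ^ 2 + 2 * (n : ℤ) - 1))
        * (a : ℤ) ^ 2
      + (-1200 * (n : ℤ) ^ 5 + 1920 * (n : ℤ) ^ 4 + 1380 * (n : ℤ) ^ 3 - 3180 * (n : ℤ) ^ 2
        + 1080 * (n : ℤ)) * (a : ℤ) * (n ! : ℤ)
      + (6425 - 7590 * ((n : ℤ) + 1) + 4535 * ((n : ℤ) + 1) ^ 2 - 1464 * ((n : ℤ) + 1) ^ 3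
        + 200 * ((n : ℤ) + 1) ^ 4) * (n ! : ℤ) ^ 2 with hA
  set Y : ℚ := (∑ k ∈ Finset.Icc 1 n, (k : ℚ) ^ 5 * H k ^ 2)
      - (-(77 / 1200) * (p : ℚ) - 1 / 30) with hY
  have key : Y * (21600 * (n ! : ℚ) ^ 2) = (p : ℚ) ^ 2 * ((A : ℤ) : ℚ) := by
    rw [hY, closed_form n, hp_cast, hH, hA]
    push_cast
    field_simp
    ring
  have hden : ((Y.den : ℚ)) ≠ 0 := by
    exact_mod_cast Y.den_ne_zero
  have hnum : ((Y.num : ℚ)) = Y * (Y.den : ℚ) := by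
    have h := Rat.num_div_den Y
    rw [div_eq_iff hden] at h
    exact h
  have hq : ((Y.num : ℚ)) * (21600 * (n ! : ℚ) ^ 2) = (p : ℚ) ^ 2 * ((A : ℤ) : ℚ) * (Y.den : ℚ) := by
    rw [hnum]
    calc Y * (Y.den : ℚ) * (21600 * (n ! : ℚ) ^ 2)
        = Y * (21600 * (n ! : ℚ) ^ 2) * (Y.den : ℚ) := by ring
      _ = (p : ℚ) ^ 2 * ((A : ℤ) : ℚ) * (Y.den : ℚ) := by rw [key]
  have hz : Y.num * (21600 * (n ! : ℤ) ^ 2) = (p : ℤ) ^ 2 * A * (Y.den : ℤ) := by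
    exact_mod_cast hq
  have hdvd : (p : ℤ) ^ 2 ∣ Y.num * (21600 * (n ! : ℤ) ^ 2) := ⟨A * (Y.den : ℤ), by rw [hz]; ring⟩
  have hnotdvd : ¬ (p : ℤ) ∣ (21600 * (n ! : ℤ) ^ 2) := by
    have hnat : ¬ p ∣ 21600 * (n !) ^ 2 := by
      intro h
      rcases (Nat.Prime.dvd_mul hp).mp h with h1 | h2
      · have h216 : (21600 : ℕ) = 2 ^ 5 * (3 ^ 3 * 5 ^ 2) := by norm_num
        rw [h216] at h1
        rcases (Nat.Prime.dvd_mul hp).mp h1 with h3 | h4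
        · have := Nat.le_of_dvd (by norm_num) (hp.dvd_of_dvd_pow h3)
          omega
        · rcases (Nat.Prime.dvd_mul hp).mp h4 with h5 | h6
          · have := Nat.le_of_dvd (by norm_num) (hp.dvd_of_dvd_pow h5)
            omega
          · have := Nat.le_of_dvd (by norm_num) (hp.dvd_of_dvd_pow h6)
            omega
      · have hpf : p ∣ n ! := hp.dvd_of_dvd_pow h2
        have := (Nat.Prime.dvd_factorial hp).mp hpf
        omega
    intro h
    apply hnat
    have h' : (p : ℤ) ∣ ((21600 * (n !) ^ 2 : ℕ) : ℤ) := by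
      push_cast
      exact h
    exact_mod_cast h'
  have hcop : IsCoprime ((p : ℤ) ^ 2) (21600 * (n ! : ℤ) ^ 2) := by
    apply IsCoprime.pow_left
    exact ((Nat.prime_iff_prime_int.mp hp).coprime_iff_not_dvd).mpr hnotdvd
  exact hcop.dvd_of_dvd_mul_right hdvd
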